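/- arXiv:2212.03797 — 3 statements merged into one kernel-verified Lean document; each statement's English description precedes it below -/
import Mathlib

section
/- Let E be a real Banach space, k ∈ ℕ, and η, ξ ∈ L_k(Ω;E). Then the injective k-th moments satisfy ‖M^k_ε[η] − M^k_ε[ξ]‖_ε ≤ ‖η − ξ‖_{L_k(Ω;E)} · Σ_{i=0}^{k−1} ‖η‖_{L_k(Ω;E)}^i ‖ξ‖_{L_k(Ω;E)}^{k−i−1}. -/
open MeasureTheory BigOperators
open scoped TensorProduct ENNReal

variable {E : Type*} [NormedAddCommGroup E] [NormedSpace ℝ E]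

noncomputable def tpair {k : ℕ} (f : Fin k → (E →L[ℝ] ℝ)) :
    (⨂[ℝ] _ : Fin k, E) →ₗ[ℝ] ℝ :=
  PiTensorProduct.lift
    ((MultilinearMap.mkPiAlgebra ℝ (Fin k) ℝ).compLinearMap fun i => (f i).toLinearMap)

/-- injective tensor norm on the k-fold algebraic tensor product -/
noncomputable def injNorm {k : ℕ} (U : ⨂[ℝ] _ : Fin k, E) : ℝ :=
  sSup {r | ∃ f : Fin k → (E →L[ℝ] ℝ), (∀ i, ‖f i‖ ≤ 1) ∧ r = |tpair f U|}


-- aux 1: telescoping product bound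
lemma aux_prod_sub_prod {k : ℕ} (a b : Fin k → ℝ) (X Y D : ℝ) (hX : 0 ≤ X) (hY : 0 ≤ Y)
    (hD : 0 ≤ D) (ha : ∀ i, |a i| ≤ X) (hb : ∀ i, |b i| ≤ Y) (hab : ∀ i, |a i - b i| ≤ D) :
    |∏ i, a i - ∏ i, b i| ≤ ∑ j ∈ Finset.range k, D * X ^ j * Y ^ (k - 1 - j) := by
  induction k with
  | zero => simp
  | succ n ih =>
    have key : (∏ i, a i) - (∏ i, b i)
        = ((∏ i : Fin n, a i.castSucc) - (∏ i : Fin n, b i.castSucc)) * a (Fin.last n)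
          + (∏ i : Fin n, b i.castSucc) * (a (Fin.last n) - b (Fin.last n)) := by
      rw [Fin.prod_univ_castSucc (f := a), Fin.prod_univ_castSucc (f := b)]; ring
    have hbprod : |∏ i : Fin n, b i.castSucc| ≤ Y ^ n := by
      calc |∏ i : Fin n, b i.castSucc| = ∏ i : Fin n, |b i.castSucc| := by
            rw [Finset.abs_prod]
        _ ≤ ∏ i : Fin n, Y := Finset.prod_le_prod (fun i _ => abs_nonneg _)
            (fun i _ => hb _)
        _ = Y ^ n := by simp
    have ihh := ih (fun i => a i.castSucc) (fun i => b i.castSucc)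
      (fun i => ha _) (fun i => hb _) (fun i => hab _)
    calc |∏ i, a i - ∏ i, b i|
        ≤ |(∏ i : Fin n, a i.castSucc) - (∏ i : Fin n, b i.castSucc)| * |a (Fin.last n)|
          + |∏ i : Fin n, b i.castSucc| * |a (Fin.last n) - b (Fin.last n)| := by
          rw [key]
          exact (abs_add_le _ _).trans (by rw [abs_mul, abs_mul])
      _ ≤ (∑ j ∈ Finset.range n, D * X ^ j * Y ^ (n - 1 - j)) * X + Y ^ n * D := by
          exact add_le_add
            (mul_le_mul ihh (ha _) (abs_nonneg _)
              (Finset.sum_nonneg fun j _ => by positivity))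
            (mul_le_mul hbprod (hab _) (abs_nonneg _) (pow_nonneg hY n))
      _ = ∑ j ∈ Finset.range (n + 1), D * X ^ j * Y ^ (n + 1 - 1 - j) := by
          rw [Finset.sum_range_succ' (fun j => D * X ^ j * Y ^ (n + 1 - 1 - j)) n]
          rw [Finset.sum_mul]
          congr 1
          · apply Finset.sum_congr rfl
            intro j hj
            have hjn : j < n := Finset.mem_range.mp hj
            have : n + 1 - 1 - (j + 1) = n - 1 - j := by omega
            rw [this]; ring
          · simp [mul_comm]

-- aux 2: (a+b)^n ≤ 2^n (a^n + b^n)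
lemma aux_add_pow {a b : ℝ} (ha : 0 ≤ a) (hb : 0 ≤ b) (n : ℕ) :
    (a + b) ^ n ≤ 2 ^ n * (a ^ n + b ^ n) := by
  have h1 : a + b ≤ 2 * (a ⊔ b) := by
    rcases le_total a b with h | h
    · rw [max_eq_right h]; linarith
    · rw [max_eq_left h]; linarith
  have h2 : (a + b) ^ n ≤ (2 * (a ⊔ b)) ^ n := pow_le_pow_left₀ (by linarith) h1 n
  have h3 : (a ⊔ b) ^ n ≤ a ^ n + b ^ n := by
    rcases max_cases a b with ⟨h, _⟩ | ⟨h, _⟩ <;> rw [h] <;>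
      [linarith [pow_nonneg hb n]; linarith [pow_nonneg ha n]]
  calc (a + b) ^ n ≤ (2 * (a ⊔ b)) ^ n := h2
    _ = 2 ^ n * (a ⊔ b) ^ n := by rw [mul_pow]
    _ ≤ 2 ^ n * (a ^ n + b ^ n) := mul_le_mul_of_nonneg_left h3 (by positivity)

-- aux 3: three-function Hölder
lemma aux_holder3 {Ω : Type*} [MeasurableSpace Ω] (μ : Measure Ω)
    (k j m : ℕ) (hjm : 1 + j + m = k)
    (g0 g1 g2 : Ω → ℝ) (h0 : AEStronglyMeasurable g0 μ) (h1 : AEStronglyMeasurable g1 μ)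
    (h2 : AEStronglyMeasurable g2 μ)
    (hn0 : ∀ ω, 0 ≤ g0 ω) (hn1 : ∀ ω, 0 ≤ g1 ω) (hn2 : ∀ ω, 0 ≤ g2 ω)
    (hi0 : Integrable (fun ω => g0 ω ^ k) μ) (hi1 : Integrable (fun ω => g1 ω ^ k) μ)
    (hi2 : Integrable (fun ω => g2 ω ^ k) μ) :
    ∫ ω, g0 ω * g1 ω ^ j * g2 ω ^ m ∂μ
      ≤ (∫ ω, g0 ω ^ k ∂μ) ^ (1 / (k : ℝ))
        * ((∫ ω, g1 ω ^ k ∂μ) ^ (1 / (k : ℝ))) ^ j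
        * ((∫ ω, g2 ω ^ k ∂μ) ^ (1 / (k : ℝ))) ^ m := by
  have hk : 0 < k := by omega
  have hK : (0 : ℝ) < k := by exact_mod_cast hk
  set p : Fin 3 → ℝ := ![1 / k, j / k, m / k] with hp_def
  set F : Fin 3 → Ω → ℝ≥0∞ := ![fun ω => ENNReal.ofReal (g0 ω ^ k),
    fun ω => ENNReal.ofReal (g1 ω ^ k), fun ω => ENNReal.ofReal (g2 ω ^ k)] with hF_def
  have hF : ∀ i ∈ Finset.univ, AEMeasurable (F i) μ := by
    intro i _
    fin_cases i <;> simp only [hF_def, Matrix.cons_val_zero, Matrix.cons_val_one,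
      Matrix.head_cons, Matrix.cons_val_two, Matrix.tail_cons] <;>
      exact ENNReal.measurable_ofReal.comp_aemeasurable
        (by first
          | exact (h0.aemeasurable.pow_const k)
          | exact (h1.aemeasurable.pow_const k)
          | exact (h2.aemeasurable.pow_const k))
  have hp_sum : ∑ i, p i = 1 := by
    simp only [hp_def, Fin.sum_univ_three, Matrix.cons_val_zero, Matrix.cons_val_one,
      Matrix.head_cons, Matrix.cons_val_two, Matrix.tail_cons]
    field_simp
    push_cast [← hjm]
    ring
  have hp_nn : ∀ i ∈ Finset.univ, 0 ≤ p i := by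
    intro i _; fin_cases i <;> simp [hp_def] <;> positivity
  have key := ENNReal.lintegral_prod_norm_pow_le Finset.univ hF hp_sum hp_nn (μ := μ)
  -- rewrite LHS
  have hprod : ∀ ω, ∏ i, F i ω ^ p i = ENNReal.ofReal (g0 ω * g1 ω ^ j * g2 ω ^ m) := by
    intro ω
    have e : ∀ (x : ℝ) (n : ℕ), 0 ≤ x → ENNReal.ofReal (x ^ k) ^ ((n : ℝ) / k)
        = ENNReal.ofReal x ^ n := by
      intro x n hx
      rw [ENNReal.ofReal_pow hx, ← ENNReal.rpow_natCast (ENNReal.ofReal x) k,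
        ← ENNReal.rpow_mul, ← ENNReal.rpow_natCast (ENNReal.ofReal x) n]
      congr 1
      field_simp
    have e1 : ENNReal.ofReal (g0 ω ^ k) ^ ((1:ℝ) / k) = ENNReal.ofReal (g0 ω) := by
      have := e (g0 ω) 1 (hn0 ω)
      simpa using this
    simp only [Fin.prod_univ_three, hF_def, hp_def, Matrix.cons_val_zero, Matrix.cons_val_one,
      Matrix.head_cons, Matrix.cons_val_two, Matrix.tail_cons]
    rw [e1, e _ j (hn1 ω), e _ m (hn2 ω),
      ENNReal.ofReal_mul (mul_nonneg (hn0 ω) (pow_nonneg (hn1 ω) j)),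
      ENNReal.ofReal_mul (hn0 ω),
      ENNReal.ofReal_pow (hn1 ω), ENNReal.ofReal_pow (hn2 ω)]
  have hlhs : ∫⁻ ω, ∏ i, F i ω ^ p i ∂μ
      = ∫⁻ ω, ENNReal.ofReal (g0 ω * g1 ω ^ j * g2 ω ^ m) ∂μ := by
    simp_rw [hprod]
  -- rewrite RHS
  have hint0 : (0:ℝ) ≤ ∫ ω, g0 ω ^ k ∂μ := integral_nonneg fun ω => pow_nonneg (hn0 ω) k
  have hint1 : (0:ℝ) ≤ ∫ ω, g1 ω ^ k ∂μ := integral_nonneg fun ω => pow_nonneg (hn1 ω) k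
  have hint2 : (0:ℝ) ≤ ∫ ω, g2 ω ^ k ∂μ := integral_nonneg fun ω => pow_nonneg (hn2 ω) k
  have hof : ∀ (g : Ω → ℝ), (∀ ω, 0 ≤ g ω) → Integrable (fun ω => g ω ^ k) μ →
      ∫⁻ ω, ENNReal.ofReal (g ω ^ k) ∂μ = ENNReal.ofReal (∫ ω, g ω ^ k ∂μ) := by
    intro g hg hgi
    rw [ofReal_integral_eq_lintegral_ofReal hgi
      (Filter.Eventually.of_forall fun ω => pow_nonneg (hg ω) k)]
  have e2 : ∀ (I : ℝ) (n : ℕ), 0 ≤ I →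
      ENNReal.ofReal I ^ ((n : ℝ) / k) = ENNReal.ofReal ((I ^ (1 / (k:ℝ))) ^ n) := by
    intro I n hI
    rw [ENNReal.ofReal_rpow_of_nonneg hI (by positivity), ← Real.rpow_natCast (I ^ (1/(k:ℝ))) n,
      ← Real.rpow_mul hI]
    congr 1
    field_simp
  have hrhs : ∏ i, (∫⁻ ω, F i ω ∂μ) ^ p i
      = ENNReal.ofReal ((∫ ω, g0 ω ^ k ∂μ) ^ (1 / (k : ℝ))
        * ((∫ ω, g1 ω ^ k ∂μ) ^ (1 / (k : ℝ))) ^ j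
        * ((∫ ω, g2 ω ^ k ∂μ) ^ (1 / (k : ℝ))) ^ m) := by
    simp only [Fin.prod_univ_three, hF_def, hp_def, Matrix.cons_val_zero, Matrix.cons_val_one,
      Matrix.head_cons, Matrix.cons_val_two, Matrix.tail_cons]
    rw [hof g0 hn0 hi0, hof g1 hn1 hi1, hof g2 hn2 hi2]
    have e1 : ENNReal.ofReal (∫ ω, g0 ω ^ k ∂μ) ^ ((1:ℝ)/k)
        = ENNReal.ofReal ((∫ ω, g0 ω ^ k ∂μ) ^ (1/(k:ℝ))) := by
      have := e2 (∫ ω, g0 ω ^ k ∂μ) 1 hint0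
      simpa using this
    rw [e1, e2 _ j hint1, e2 _ m hint2,
      ← ENNReal.ofReal_mul (Real.rpow_nonneg hint0 _),
      ← ENNReal.ofReal_mul (mul_nonneg (Real.rpow_nonneg hint0 _)
        (pow_nonneg (Real.rpow_nonneg hint1 _) j))]
  rw [hlhs, hrhs] at key
  -- convert to real integral
  have hmeas : AEStronglyMeasurable (fun ω => g0 ω * g1 ω ^ j * g2 ω ^ m) μ :=
    (h0.mul (h1.pow j)).mul (h2.pow m)
  rw [integral_eq_lintegral_of_nonneg_ae
    (Filter.Eventually.of_forall fun ω =>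
      mul_nonneg (mul_nonneg (hn0 ω) (pow_nonneg (hn1 ω) j)) (pow_nonneg (hn2 ω) m)) hmeas]
  calc (∫⁻ ω, ENNReal.ofReal (g0 ω * g1 ω ^ j * g2 ω ^ m) ∂μ).toReal
      ≤ (ENNReal.ofReal ((∫ ω, g0 ω ^ k ∂μ) ^ (1 / (k : ℝ))
        * ((∫ ω, g1 ω ^ k ∂μ) ^ (1 / (k : ℝ))) ^ j
        * ((∫ ω, g2 ω ^ k ∂μ) ^ (1 / (k : ℝ))) ^ m)).toReal :=
        ENNReal.toReal_mono ENNReal.ofReal_ne_top key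
    _ = _ := ENNReal.toReal_ofReal (mul_nonneg
        (mul_nonneg (Real.rpow_nonneg hint0 _) (pow_nonneg (Real.rpow_nonneg hint1 _) j))
        (pow_nonneg (Real.rpow_nonneg hint2 _) m))

/-- **Lemma (difference of injective k-th moments).**
For `η, ξ ∈ L_k(Ω;E)` with injective `k`-th moments `Mη = E[⊗^k η]`,
`Mξ = E[⊗^k ξ]` (characterized weakly, as for the Bochner integral), one has
`‖M^k_ε[η] − M^k_ε[ξ]‖_ε
   ≤ ‖η−ξ‖_{L_k(Ω;E)} Σ_{i=0}^{k−1} ‖η‖_{L_k(Ω;E)}^i ‖ξ‖_{L_k(Ω;E)}^{k−i−1}`. -/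
theorem kth_moment_difference
    {Ω : Type*} [MeasurableSpace Ω] (μ : Measure Ω) [IsProbabilityMeasure μ]
    (k : ℕ) (hk : 1 ≤ k) (η ξ : Ω → E)
    (hη_meas : AEStronglyMeasurable η μ) (hξ_meas : AEStronglyMeasurable ξ μ)
    -- η, ξ ∈ L_k(Ω;E):
    (hη_Lk : Integrable (fun ω => ‖η ω‖ ^ k) μ)
    (hξ_Lk : Integrable (fun ω => ‖ξ ω‖ ^ k) μ)
    -- the injective k-th moments, characterized by their dual pairings:
    (Mη Mξ : ⨂[ℝ] _ : Fin k, E)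
    (hMη : ∀ f : Fin k → (E →L[ℝ] ℝ), tpair f Mη = ∫ ω, ∏ i, f i (η ω) ∂μ)
    (hMξ : ∀ f : Fin k → (E →L[ℝ] ℝ), tpair f Mξ = ∫ ω, ∏ i, f i (ξ ω) ∂μ) :
    injNorm (Mη - Mξ)
      ≤ (∫ ω, ‖η ω - ξ ω‖ ^ k ∂μ) ^ (1 / (k : ℝ))
        * ∑ i ∈ Finset.range k,
            ((∫ ω, ‖η ω‖ ^ k ∂μ) ^ (1 / (k : ℝ))) ^ i
              * ((∫ ω, ‖ξ ω‖ ^ k ∂μ) ^ (1 / (k : ℝ))) ^ (k - i - 1) := by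
  have hA0 : (0:ℝ) ≤ (∫ ω, ‖η ω - ξ ω‖ ^ k ∂μ) ^ (1 / (k : ℝ)) :=
    Real.rpow_nonneg (integral_nonneg fun ω => by positivity) _
  have hB0 : (0:ℝ) ≤ (∫ ω, ‖η ω‖ ^ k ∂μ) ^ (1 / (k : ℝ)) :=
    Real.rpow_nonneg (integral_nonneg fun ω => by positivity) _
  have hC0 : (0:ℝ) ≤ (∫ ω, ‖ξ ω‖ ^ k ∂μ) ^ (1 / (k : ℝ)) :=
    Real.rpow_nonneg (integral_nonneg fun ω => by positivity) _
  -- integrability of ‖η - ξ‖ ^ k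
  have hd_Lk : Integrable (fun ω => ‖η ω - ξ ω‖ ^ k) μ := by
    apply Integrable.mono ((hη_Lk.add hξ_Lk).const_mul (2 ^ k))
      ((hη_meas.sub hξ_meas).norm.pow k)
    filter_upwards with ω
    simp only [Pi.pow_apply, Pi.mul_apply, Pi.add_apply, Pi.sub_apply]
    rw [Real.norm_eq_abs, Real.norm_eq_abs,
      abs_of_nonneg (show (0:ℝ) ≤ ‖η ω - ξ ω‖ ^ k by positivity),
      abs_of_nonneg (show (0:ℝ) ≤ 2 ^ k * (‖η ω‖ ^ k + ‖ξ ω‖ ^ k) by positivity)]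
    calc ‖η ω - ξ ω‖ ^ k ≤ (‖η ω‖ + ‖ξ ω‖) ^ k :=
          pow_le_pow_left₀ (norm_nonneg _) (norm_sub_le _ _) k
      _ ≤ 2 ^ k * (‖η ω‖ ^ k + ‖ξ ω‖ ^ k) := aux_add_pow (norm_nonneg _) (norm_nonneg _) k
  -- integrability of the Hölder-type integrands
  have hint_h : ∀ j m : ℕ, 1 + j + m = k →
      Integrable (fun ω => ‖η ω - ξ ω‖ * ‖η ω‖ ^ j * ‖ξ ω‖ ^ m) μ := by
    intro j m hjm
    apply Integrable.mono ((hη_Lk.add hξ_Lk).const_mul (2 ^ k))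
      (((hη_meas.sub hξ_meas).norm.mul (hη_meas.norm.pow j)).mul (hξ_meas.norm.pow m))
    filter_upwards with ω
    simp only [Pi.pow_apply, Pi.mul_apply, Pi.add_apply, Pi.sub_apply]
    rw [Real.norm_eq_abs, Real.norm_eq_abs,
      abs_of_nonneg (show (0:ℝ) ≤ ‖η ω - ξ ω‖ * ‖η ω‖ ^ j * ‖ξ ω‖ ^ m by positivity),
      abs_of_nonneg (show (0:ℝ) ≤ 2 ^ k * (‖η ω‖ ^ k + ‖ξ ω‖ ^ k) by positivity)]
    have hS : (0:ℝ) ≤ ‖η ω‖ + ‖ξ ω‖ := by positivity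
    calc ‖η ω - ξ ω‖ * ‖η ω‖ ^ j * ‖ξ ω‖ ^ m
        ≤ (‖η ω‖ + ‖ξ ω‖) * (‖η ω‖ + ‖ξ ω‖) ^ j * (‖η ω‖ + ‖ξ ω‖) ^ m := by
          have e1 : ‖η ω - ξ ω‖ ≤ ‖η ω‖ + ‖ξ ω‖ := norm_sub_le _ _
          have e2 : ‖η ω‖ ^ j ≤ (‖η ω‖ + ‖ξ ω‖) ^ j :=
            pow_le_pow_left₀ (norm_nonneg _) (by linarith [norm_nonneg (ξ ω)]) j
          have e3 : ‖ξ ω‖ ^ m ≤ (‖η ω‖ + ‖ξ ω‖) ^ m :=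
            pow_le_pow_left₀ (norm_nonneg _) (by linarith [norm_nonneg (η ω)]) m
          exact mul_le_mul (mul_le_mul e1 e2 (by positivity) hS) e3 (by positivity)
            (by positivity)
      _ = (‖η ω‖ + ‖ξ ω‖) ^ (1 + j + m) := by rw [pow_add, pow_add, pow_one]
      _ = (‖η ω‖ + ‖ξ ω‖) ^ k := by rw [hjm]
      _ ≤ 2 ^ k * (‖η ω‖ ^ k + ‖ξ ω‖ ^ k) := aux_add_pow (norm_nonneg _) (norm_nonneg _) k
  unfold injNorm
  apply Real.sSup_le _ (mul_nonneg hA0 (Finset.sum_nonneg fun i _ =>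
    mul_nonneg (pow_nonneg hB0 i) (pow_nonneg hC0 _)))
  rintro r ⟨f, hf1, rfl⟩
  -- pointwise bound |f i x| ≤ ‖x‖
  have hfx : ∀ (i : Fin k) (x : E), |f i x| ≤ ‖x‖ := by
    intro i x
    calc |f i x| = ‖f i x‖ := (Real.norm_eq_abs _).symm
      _ ≤ ‖f i‖ * ‖x‖ := (f i).le_opNorm x
      _ ≤ 1 * ‖x‖ := by gcongr; exact hf1 i
      _ = ‖x‖ := one_mul _
  -- integrability of the two product functions
  have hmeasprod : ∀ (ζ : Ω → E), AEStronglyMeasurable ζ μ →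
      AEStronglyMeasurable (fun ω => ∏ i, f i (ζ ω)) μ := fun ζ hζ =>
    Finset.aestronglyMeasurable_fun_prod _ fun i _ =>
      (f i).continuous.comp_aestronglyMeasurable hζ
  have hboundprod : ∀ (ζ : Ω → E) (ω : Ω), |∏ i, f i (ζ ω)| ≤ ‖ζ ω‖ ^ k := by
    intro ζ ω
    calc |∏ i, f i (ζ ω)| = ∏ i, |f i (ζ ω)| := Finset.abs_prod _ _
      _ ≤ ∏ _i : Fin k, ‖ζ ω‖ :=
          Finset.prod_le_prod (fun i _ => abs_nonneg _) (fun i _ => hfx i _)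
      _ = ‖ζ ω‖ ^ k := by simp
  have hinta : Integrable (fun ω => ∏ i, f i (η ω)) μ := by
    apply Integrable.mono hη_Lk (hmeasprod η hη_meas)
    filter_upwards with ω
    rw [Real.norm_eq_abs, Real.norm_eq_abs, abs_of_nonneg (by positivity : (0:ℝ) ≤ ‖η ω‖ ^ k)]
    exact hboundprod η ω
  have hintb : Integrable (fun ω => ∏ i, f i (ξ ω)) μ := by
    apply Integrable.mono hξ_Lk (hmeasprod ξ hξ_meas)
    filter_upwards with ω
    rw [Real.norm_eq_abs, Real.norm_eq_abs, abs_of_nonneg (by positivity : (0:ℝ) ≤ ‖ξ ω‖ ^ k)]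
    exact hboundprod ξ ω
  rw [map_sub, hMη f, hMξ f, ← integral_sub hinta hintb]
  -- pointwise telescoping bound
  have hkey : ∀ ω, |(∏ i, f i (η ω)) - ∏ i, f i (ξ ω)|
      ≤ ∑ j ∈ Finset.range k, ‖η ω - ξ ω‖ * ‖η ω‖ ^ j * ‖ξ ω‖ ^ (k - 1 - j) := by
    intro ω
    apply aux_prod_sub_prod (fun i => f i (η ω)) (fun i => f i (ξ ω)) _ _ _
      (norm_nonneg _) (norm_nonneg _) (norm_nonneg _)
      (fun i => hfx i _) (fun i => hfx i _)
    intro i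
    calc |f i (η ω) - f i (ξ ω)| = |f i (η ω - ξ ω)| := by rw [map_sub]
      _ ≤ ‖η ω - ξ ω‖ := hfx i _
  have hintsum : Integrable
      (fun ω => ∑ j ∈ Finset.range k, ‖η ω - ξ ω‖ * ‖η ω‖ ^ j * ‖ξ ω‖ ^ (k - 1 - j)) μ :=
    integrable_finset_sum _ fun j hj => hint_h j (k - 1 - j)
      (by have := Finset.mem_range.mp hj; omega)
  calc |∫ ω, ((∏ i, f i (η ω)) - ∏ i, f i (ξ ω)) ∂μ|
      ≤ ∫ ω, |(∏ i, f i (η ω)) - ∏ i, f i (ξ ω)| ∂μ := by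
        simpa [Real.norm_eq_abs] using
          norm_integral_le_integral_norm (fun ω => (∏ i, f i (η ω)) - ∏ i, f i (ξ ω)) (μ := μ)
    _ ≤ ∫ ω, ∑ j ∈ Finset.range k, ‖η ω - ξ ω‖ * ‖η ω‖ ^ j * ‖ξ ω‖ ^ (k - 1 - j) ∂μ :=
        integral_mono_of_nonneg (Filter.Eventually.of_forall fun ω => abs_nonneg _)
          hintsum (Filter.Eventually.of_forall hkey)
    _ = ∑ j ∈ Finset.range k, ∫ ω, ‖η ω - ξ ω‖ * ‖η ω‖ ^ j * ‖ξ ω‖ ^ (k - 1 - j) ∂μ :=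
        integral_finset_sum _ fun j hj => hint_h j (k - 1 - j)
          (by have := Finset.mem_range.mp hj; omega)
    _ ≤ ∑ j ∈ Finset.range k, (∫ ω, ‖η ω - ξ ω‖ ^ k ∂μ) ^ (1 / (k : ℝ))
          * ((∫ ω, ‖η ω‖ ^ k ∂μ) ^ (1 / (k : ℝ))) ^ j
          * ((∫ ω, ‖ξ ω‖ ^ k ∂μ) ^ (1 / (k : ℝ))) ^ (k - 1 - j) := by
        apply Finset.sum_le_sum
        intro j hj
        exact aux_holder3 μ k j (k - 1 - j) (by have := Finset.mem_range.mp hj; omega)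
          _ _ _ (hη_meas.sub hξ_meas).norm hη_meas.norm hξ_meas.norm
          (fun ω => norm_nonneg _) (fun ω => norm_nonneg _) (fun ω => norm_nonneg _)
          hd_Lk hη_Lk hξ_Lk
    _ = (∫ ω, ‖η ω - ξ ω‖ ^ k ∂μ) ^ (1 / (k : ℝ))
        * ∑ i ∈ Finset.range k,
            ((∫ ω, ‖η ω‖ ^ k ∂μ) ^ (1 / (k : ℝ))) ^ i
              * ((∫ ω, ‖ξ ω‖ ^ k ∂μ) ^ (1 / (k : ℝ))) ^ (k - i - 1) := by
        rw [Finset.mul_sum]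
        apply Finset.sum_congr rfl
        intro i _
        have : k - i - 1 = k - 1 - i := by omega
        rw [this, mul_assoc]
end

section
/- Let H be a real separable Hilbert space with orthonormal vectors e_1,…,e_n, and λ_1,…,λ_n ∈ ℝ. Then the projective tensor norm of U = Σ_{j=1}^n λ_j e_j ⊗ e_j in H ⊗ H equals Σ_{j=1}^n |λ_j|. -/
open BigOperators
open scoped TensorProduct RealInnerProductSpace

variable {H : Type*} [NormedAddCommGroup H] [InnerProductSpace ℝ H]

/-- projective tensor norm on the algebraic tensor product `H ⊗ H` -/
noncomputable def projNorm (U : H ⊗[ℝ] H) : ℝ :=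
  sInf {r | ∃ (m : ℕ) (x y : Fin m → H),
    U = ∑ i, x i ⊗ₜ[ℝ] y i ∧ r = ∑ i, ‖x i‖ * ‖y i‖}

/-- diagonal bilinear test functional -/
noncomputable def diagForm (n : ℕ) (e : Fin n → H) (lam : Fin n → ℝ) :
    H →ₗ[ℝ] H →ₗ[ℝ] ℝ :=
  LinearMap.mk₂ ℝ (fun x y => ∑ j, Real.sign (lam j) * ((inner ℝ (e j) (x) : ℝ) * (inner ℝ (e j) (y) : ℝ)))
    (fun x x' y => by
      simp only [inner_add_right, add_mul, mul_add, Finset.sum_add_distrib])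
    (fun c x y => by
      simp only [inner_smul_right, smul_eq_mul, Finset.mul_sum]
      exact Finset.sum_congr rfl fun j _ => by ring)
    (fun x y y' => by
      simp only [inner_add_right, add_mul, mul_add, Finset.sum_add_distrib])
    (fun c x y => by
      simp only [inner_smul_right, smul_eq_mul, Finset.mul_sum]
      exact Finset.sum_congr rfl fun j _ => by ring)

lemma abs_sign_le_one (r : ℝ) : |Real.sign r| ≤ 1 := by
  rcases Real.sign_apply_eq r with h | h | h <;> rw [h] <;> norm_num

lemma diagForm_le (n : ℕ) (e : Fin n → H) (he : Orthonormal ℝ e) (lam : Fin n → ℝ)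
    (x y : H) : diagForm n e lam x y ≤ ‖x‖ * ‖y‖ := by
  simp only [diagForm, LinearMap.mk₂_apply]
  have h1 : (∑ j, Real.sign (lam j) * ((inner ℝ (e j) (x) : ℝ) * (inner ℝ (e j) (y) : ℝ))) ≤ ∑ j, |(inner ℝ (e j) (x) : ℝ)| * |(inner ℝ (e j) (y) : ℝ)| := by
    refine Finset.sum_le_sum fun j _ => ?_
    calc Real.sign (lam j) * ((inner ℝ (e j) (x) : ℝ) * (inner ℝ (e j) (y) : ℝ))
        ≤ |Real.sign (lam j) * ((inner ℝ (e j) (x) : ℝ) * (inner ℝ (e j) (y) : ℝ))| := le_abs_self _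
      _ = |Real.sign (lam j)| * (|(inner ℝ (e j) (x) : ℝ)| * |(inner ℝ (e j) (y) : ℝ)|) := by
          rw [abs_mul, abs_mul]
      _ ≤ 1 * (|(inner ℝ (e j) (x) : ℝ)| * |(inner ℝ (e j) (y) : ℝ)|) := by
          have := abs_sign_le_one (lam j)
          have h2 : (0:ℝ) ≤ |(inner ℝ (e j) (x) : ℝ)| * |(inner ℝ (e j) (y) : ℝ)| := by positivity
          nlinarith
      _ = _ := one_mul _
  -- Cauchy-Schwarz + Bessel
  have hcs : (∑ j, |(inner ℝ (e j) (x) : ℝ)| * |(inner ℝ (e j) (y) : ℝ)|) ^ 2 ≤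
      (∑ j, |(inner ℝ (e j) (x) : ℝ)| ^ 2) * ∑ j, |(inner ℝ (e j) (y) : ℝ)| ^ 2 :=
    Finset.sum_mul_sq_le_sq_mul_sq _ _ _
  have hbx : (∑ j, |(inner ℝ (e j) (x) : ℝ)| ^ 2) ≤ ‖x‖ ^ 2 := by
    simpa [Real.norm_eq_abs] using he.sum_inner_products_le (s := Finset.univ) x
  have hby : (∑ j, |(inner ℝ (e j) (y) : ℝ)| ^ 2) ≤ ‖y‖ ^ 2 := by
    simpa [Real.norm_eq_abs] using he.sum_inner_products_le (s := Finset.univ) y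
  have hsum_nonneg : (0:ℝ) ≤ ∑ j, |(inner ℝ (e j) (x) : ℝ)| * |(inner ℝ (e j) (y) : ℝ)| :=
    Finset.sum_nonneg fun j _ => by positivity
  have h2 : (∑ j, |(inner ℝ (e j) (x) : ℝ)| * |(inner ℝ (e j) (y) : ℝ)|) ^ 2 ≤ (‖x‖ * ‖y‖) ^ 2 := by
    calc (∑ j, |(inner ℝ (e j) (x) : ℝ)| * |(inner ℝ (e j) (y) : ℝ)|) ^ 2
        ≤ (∑ j, |(inner ℝ (e j) (x) : ℝ)| ^ 2) * ∑ j, |(inner ℝ (e j) (y) : ℝ)| ^ 2 := hcs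
      _ ≤ ‖x‖ ^ 2 * ‖y‖ ^ 2 := by
          refine mul_le_mul hbx hby (Finset.sum_nonneg fun j _ => by positivity) (by positivity)
      _ = (‖x‖ * ‖y‖) ^ 2 := by ring
  have h3 : (∑ j, |(inner ℝ (e j) (x) : ℝ)| * |(inner ℝ (e j) (y) : ℝ)|) ≤ ‖x‖ * ‖y‖ := by
    calc (∑ j, |(inner ℝ (e j) (x) : ℝ)| * |(inner ℝ (e j) (y) : ℝ)|)
        = Real.sqrt ((∑ j, |(inner ℝ (e j) (x) : ℝ)| * |(inner ℝ (e j) (y) : ℝ)|) ^ 2) :=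
          (Real.sqrt_sq hsum_nonneg).symm
      _ ≤ Real.sqrt ((‖x‖ * ‖y‖) ^ 2) := Real.sqrt_le_sqrt h2
      _ = ‖x‖ * ‖y‖ := Real.sqrt_sq (by positivity)
  exact h1.trans h3

lemma sign_mul_self' (r : ℝ) : r * Real.sign r = |r| := by
  rcases lt_trichotomy r 0 with h | h | h
  · rw [Real.sign_of_neg h, abs_of_neg h]; ring
  · simp [h]
  · rw [Real.sign_of_pos h, abs_of_pos h]; ring

/-- **Projective norm of a diagonal element.**
For orthonormal `e₁,…,e_n` in a real separable Hilbert space `H` and reals `λ_j`,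
`‖Σ_j λ_j e_j ⊗ e_j‖_π = Σ_j |λ_j|`. -/
theorem projNorm_diagonal
    [CompleteSpace H] [TopologicalSpace.SeparableSpace H]
    (n : ℕ) (e : Fin n → H) (he : Orthonormal ℝ e) (lam : Fin n → ℝ) :
    projNorm (∑ j, lam j • (e j ⊗ₜ[ℝ] e j)) = ∑ j, |lam j| := by
  classical
  set U : H ⊗[ℝ] H := ∑ j, lam j • (e j ⊗ₜ[ℝ] e j) with hU
  set φ : H ⊗[ℝ] H →ₗ[ℝ] ℝ := TensorProduct.lift (diagForm n e lam) with hφ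
  have hee : ∀ i j, (inner ℝ (e i) (e j) : ℝ) = if i = j then 1 else 0 := orthonormal_iff_ite.mp he
  have hφU : φ U = ∑ j, |lam j| := by
    rw [hU, map_sum]
    refine Finset.sum_congr rfl fun k _ => ?_
    rw [map_smul]
    have : φ (e k ⊗ₜ[ℝ] e k) = Real.sign (lam k) := by
      simp only [hφ, TensorProduct.lift.tmul, diagForm, LinearMap.mk₂_apply, hee]
      simp [Finset.sum_ite_eq', Finset.mem_univ]
    rw [this, smul_eq_mul, sign_mul_self']
  refine le_antisymm ?_ ?_
  · -- projNorm U ≤ ∑ |λ|, by exhibiting the representation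
    apply csInf_le
    · refine ⟨0, fun r hr => ?_⟩
      obtain ⟨m, x, y, -, rfl⟩ := hr
      exact Finset.sum_nonneg fun i _ => by positivity
    · refine ⟨n, fun j => lam j • e j, e, ?_, ?_⟩
      · simp [hU, TensorProduct.smul_tmul']
      · refine Finset.sum_congr rfl fun j _ => ?_
        rw [norm_smul, he.1 j]
        simp [Real.norm_eq_abs]
  · -- lower bound via φ
    apply le_csInf
    · exact ⟨∑ j, |lam j|, n, fun j => lam j • e j, e, by simp [hU, TensorProduct.smul_tmul'],
        by refine Finset.sum_congr rfl fun j _ => ?_; rw [norm_smul, he.1 j];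
           simp [Real.norm_eq_abs]⟩
    · rintro r ⟨m, x, y, hrep, rfl⟩
      have : φ U = ∑ i, diagForm n e lam (x i) (y i) := by
        rw [hrep, map_sum]
        exact Finset.sum_congr rfl fun i _ => TensorProduct.lift.tmul _ _
      rw [← hφU, this]
      exact Finset.sum_le_sum fun i _ => diagForm_le n e he lam (x i) (y i)
end

section
/- Let I = (0,b), p ∈ (1,∞), and let a ∈ L_∞(I) satisfy 0 < a_min ≤ a(x) ≤ a_max < ∞ a.e. Let B_a(w,v) := ∫_0^b a(x) w'(x) v'(x) dx on the spaces Ẇ¹_{p,{0}}(I) × Ẇ¹_{p',{0}}(I) of W¹_p- resp. W¹_{p'}-functions vanishing at 0, normed by the L_p- resp. L_{p'}-norm of the derivative. Then the inf-sup condition holds: inf_{0 ≠ w} sup_{0 ≠ v} B_a(w,v)/(|w|_{W¹_p} |v|_{W¹_{p'}}) ≥ a_min, where for given w the supremum is attained (up to the constant) by the test function v_w(x) := ∫_0^x sign(w'(t)) |w'(t)|^{p−1} dt. -/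
open MeasureTheory

/-- **Inf-sup condition for the 1D diffusion bilinear form.**
Identify `Ẇ¹_{p,{0}}(0,b)` with `L_p(0,b)` via `w ↦ w'` (so that
`|w|_{W¹_p} = ‖w'‖_{L_p}` and `B_a(w,v) = ∫ a w' v'`). For `0 < a_min ≤ a ≤ a_max`
a.e. and conjugate exponents `p, p'`, the explicit test function
`v_w' = h_g := sign(g) |g|^{p−1}` (for `g = w'`) satisfies
`‖h_g‖_{L_{p'}} = ‖g‖_{L_p}^{p−1}` and `B_a(w, v_w) ≥ a_min ‖g‖_{L_p} ‖h_g‖_{L_{p'}}`,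
whence the inf-sup condition with constant `a_min` holds. -/
theorem one_d_inf_sup
    (b : ℝ) (hb : 0 < b) (p p' : ℝ) (hpq : p.HolderConjugate p')
    (a : ℝ → ℝ) (ha_meas : Measurable a)
    (amin amax : ℝ) (h0 : 0 < amin) (hminmax : amin ≤ amax)
    (ha_bdd : ∀ᵐ t ∂(volume.restrict (Set.Ioo 0 b)), amin ≤ a t ∧ a t ≤ amax) :
    -- (i) & (ii): the explicit test function attains the inf-sup bound:
    (∀ g : ℝ → ℝ, Measurable g →
      Integrable (fun t => |g t| ^ p) (volume.restrict (Set.Ioo 0 b)) →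
      (∫ t in Set.Ioo 0 b, |Real.sign (g t) * |g t| ^ (p - 1)| ^ p') ^ (1/p')
          = ((∫ t in Set.Ioo 0 b, |g t| ^ p) ^ (1/p)) ^ (p - 1) ∧
        amin * (∫ t in Set.Ioo 0 b, |g t| ^ p) ^ (1/p)
            * (∫ t in Set.Ioo 0 b, |Real.sign (g t) * |g t| ^ (p - 1)| ^ p') ^ (1/p')
          ≤ ∫ t in Set.Ioo 0 b, a t * g t * (Real.sign (g t) * |g t| ^ (p - 1))) ∧
    -- (iii): the inf-sup condition with constant `a_min`:
    (∀ g : ℝ → ℝ, Measurable g →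
      Integrable (fun t => |g t| ^ p) (volume.restrict (Set.Ioo 0 b)) →
      0 < ∫ t in Set.Ioo 0 b, |g t| ^ p →
      ∃ h : ℝ → ℝ, Measurable h ∧
        Integrable (fun t => |h t| ^ p') (volume.restrict (Set.Ioo 0 b)) ∧
        0 < ∫ t in Set.Ioo 0 b, |h t| ^ p' ∧
        amin * (∫ t in Set.Ioo 0 b, |g t| ^ p) ^ (1/p)
            * (∫ t in Set.Ioo 0 b, |h t| ^ p') ^ (1/p')
          ≤ ∫ t in Set.Ioo 0 b, a t * g t * h t) := by
  have hp1 : 1 < p := hpq.lt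
  have hp0 : 0 < p := hpq.pos
  have hp'0 : 0 < p' := hpq.symm.pos
  have hpm1 : 0 < p - 1 := sub_pos.2 hp1
  have hpp' : (p - 1) * p' = p := hpq.sub_one_mul_conj
  have hinv : 1 / p + 1 / p' = 1 := by
    rw [one_div, one_div]; exact hpq.inv_add_inv_eq_one
  -- pointwise facts
  have habs : ∀ x : ℝ, |Real.sign x * |x| ^ (p - 1)| = |x| ^ (p - 1) := by
    intro x
    by_cases hx : x = 0
    · simp [hx, Real.zero_rpow hpm1.ne']
    · have hs : |Real.sign x| = 1 := by
        rcases lt_or_gt_of_ne hx with h | h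
        · rw [Real.sign_of_neg h]; norm_num
        · rw [Real.sign_of_pos h]; norm_num
      rw [abs_mul, hs, one_mul, abs_of_nonneg (Real.rpow_nonneg (abs_nonneg x) _)]
  have hmul : ∀ x : ℝ, x * (Real.sign x * |x| ^ (p - 1)) = |x| ^ p := by
    intro x
    have hxs : x * Real.sign x = |x| := by
      rcases lt_trichotomy x 0 with h | h | h
      · rw [Real.sign_of_neg h, abs_of_neg h]; ring
      · simp [h]
      · rw [Real.sign_of_pos h, abs_of_pos h]; ring
    calc x * (Real.sign x * |x| ^ (p - 1)) = (x * Real.sign x) * |x| ^ (p - 1) := by ring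
      _ = |x| ^ (1:ℝ) * |x| ^ (p - 1) := by rw [hxs, Real.rpow_one]
      _ = |x| ^ (1 + (p - 1)) := (Real.rpow_add' (abs_nonneg x) (by norm_num; linarith)).symm
      _ = |x| ^ p := by ring_nf
  have hpow : ∀ x : ℝ, |Real.sign x * |x| ^ (p - 1)| ^ p' = |x| ^ p := by
    intro x
    rw [habs x, ← Real.rpow_mul (abs_nonneg x), hpp']
  -- the main estimate, shared by (i)/(ii) and (iii)
  have main : ∀ g : ℝ → ℝ, Measurable g →
      Integrable (fun t => |g t| ^ p) (volume.restrict (Set.Ioo 0 b)) →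
      (∫ t in Set.Ioo 0 b, |Real.sign (g t) * |g t| ^ (p - 1)| ^ p')
          = ∫ t in Set.Ioo 0 b, |g t| ^ p ∧
      (∫ t in Set.Ioo 0 b, |Real.sign (g t) * |g t| ^ (p - 1)| ^ p') ^ (1/p')
          = ((∫ t in Set.Ioo 0 b, |g t| ^ p) ^ (1/p)) ^ (p - 1) ∧
      amin * (∫ t in Set.Ioo 0 b, |g t| ^ p) ^ (1/p)
          * (∫ t in Set.Ioo 0 b, |Real.sign (g t) * |g t| ^ (p - 1)| ^ p') ^ (1/p')
        ≤ ∫ t in Set.Ioo 0 b, a t * g t * (Real.sign (g t) * |g t| ^ (p - 1)) := by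
    intro g hg hgint
    set S := ∫ t in Set.Ioo 0 b, |g t| ^ p with hSdef
    have hSnn : 0 ≤ S := integral_nonneg fun t => Real.rpow_nonneg (abs_nonneg _) _
    have hIeq : (∫ t in Set.Ioo 0 b, |Real.sign (g t) * |g t| ^ (p - 1)| ^ p') = S := by
      apply integral_congr_ae
      filter_upwards with t using hpow (g t)
    refine ⟨hIeq, ?_, ?_⟩
    · rw [hIeq, ← Real.rpow_mul hSnn]
      congr 1
      have hpne : p ≠ 0 := hp0.ne'
      have : 1 / p' = 1 - 1 / p := by linarith
      rw [this]; field_simp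
    · rw [hIeq]
      have hBa : (∫ t in Set.Ioo 0 b, a t * g t * (Real.sign (g t) * |g t| ^ (p - 1)))
          = ∫ t in Set.Ioo 0 b, a t * |g t| ^ p := by
        apply integral_congr_ae
        filter_upwards with t
        rw [mul_assoc, hmul (g t)]
      have hint2 : Integrable (fun t => a t * |g t| ^ p) (volume.restrict (Set.Ioo 0 b)) := by
        apply hgint.bdd_mul (c := amax) ha_meas.aestronglyMeasurable
        filter_upwards [ha_bdd] with t ⟨h1, h2⟩
        rw [Real.norm_eq_abs, abs_of_nonneg (le_trans h0.le h1)]; exact h2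
      have hmono : amin * S ≤ ∫ t in Set.Ioo 0 b, a t * |g t| ^ p := by
        rw [hSdef, ← integral_const_mul]
        apply integral_mono_ae (hgint.const_mul amin) hint2
        filter_upwards [ha_bdd] with t ⟨h1, _⟩
        exact mul_le_mul_of_nonneg_right h1 (Real.rpow_nonneg (abs_nonneg _) _)
      calc amin * S ^ (1/p) * S ^ (1/p')
          = amin * S ^ (1/p + 1/p') := by
            rw [mul_assoc, ← Real.rpow_add' hSnn (by rw [hinv]; norm_num)]
        _ = amin * S := by rw [hinv, Real.rpow_one]
        _ ≤ ∫ t in Set.Ioo 0 b, a t * |g t| ^ p := hmono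
        _ = _ := hBa.symm
  constructor
  · intro g hg hgint
    obtain ⟨_, h2, h3⟩ := main g hg hgint
    exact ⟨h2, h3⟩
  · intro g hg hgint hSpos
    obtain ⟨h1, _, h3⟩ := main g hg hgint
    refine ⟨fun t => Real.sign (g t) * |g t| ^ (p - 1), ?_, ?_, ?_, h3⟩
    · have hsign : Measurable Real.sign := by
        have : Real.sign = fun r : ℝ => if r < 0 then (-1:ℝ) else if 0 < r then 1 else 0 := rfl
        rw [this]
        exact Measurable.ite measurableSet_Iio measurable_const
          (Measurable.ite measurableSet_Ioi measurable_const measurable_const)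
      exact (hsign.comp hg).mul (by fun_prop)
    · refine hgint.congr ?_
      filter_upwards with t using (hpow (g t)).symm
    · rw [h1]; exact hSpos
end
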